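/- Let H = {h_1, …, h_n} be a Horton set sorted by increasing x-coordinate, with even-indexed points H⁺ and odd-indexed points H⁻. If h_i ∈ H⁺ and h_j ∈ H⁻ (or vice versa) with i < j, then every point of H⁺ with x-coordinate strictly between those of h_i and h_j lies above the line through h_i and h_j, and every such point of H⁻ lies below that line. -/

import Mathlib

open scoped Classical

noncomputable section

/-- A planar point set is in general position if no three distinct points are collinear. -/
def GenPos (S : Set (ℝ × ℝ)) : Prop :=
  ∀ p ∈ S, ∀ q ∈ S, ∀ r ∈ S, p ≠ q → p ≠ r → q ≠ r →
    ¬ Collinear ℝ ({p, q, r} : Set (ℝ × ℝ))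

/-- Number of points of `S` strictly inside the triangle `a b c`. -/
def triPts (S : Finset (ℝ × ℝ)) (a b c : ℝ × ℝ) : ℕ :=
  (S.filter (fun p => p ∈ interior (convexHull ℝ ({a, b, c} : Set (ℝ × ℝ))))).card

/-- `S` (colored by `χ`) contains a monochromatic triangle with at most `s` interior points. -/
def MonoTriangle {c : ℕ} (S : Finset (ℝ × ℝ)) (χ : ℝ × ℝ → Fin c) (s : ℕ) : Prop :=
  ∃ a ∈ S, ∃ b ∈ S, ∃ d ∈ S, a ≠ b ∧ a ≠ d ∧ b ≠ d ∧
    χ a = χ b ∧ χ b = χ d ∧ triPts S a b d ≤ s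
/-- The elements at even positions (0-based: positions 0,2,4,…) of a list. -/
def everyOther : List (ℝ × ℝ) → List (ℝ × ℝ)
  | [] => []
  | [a] => [a]
  | a :: _ :: l => a :: everyOther l

/-- A list of points sorted by strictly increasing x-coordinate. -/
def SortedX (l : List (ℝ × ℝ)) : Prop := l.Pairwise (fun p q => p.1 < q.1)

/-- `p` lies strictly above the (non-vertical) line through `a` and `b`. -/
def AboveLine (a b p : ℝ × ℝ) : Prop :=
  a.2 + (b.2 - a.2) / (b.1 - a.1) * (p.1 - a.1) < p.2

/-- `p` lies strictly below the (non-vertical) line through `a` and `b`. -/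
def BelowLine (a b p : ℝ × ℝ) : Prop :=
  p.2 < a.2 + (b.2 - a.2) / (b.1 - a.1) * (p.1 - a.1)

/-- Horton sets, as lists sorted by x-coordinate. For a list `l`, the odd points
`H⁻` are `everyOther l` (1-indexed positions 1,3,5,…) and the even points `H⁺` are
`everyOther l.tail` (positions 2,4,6,…). Both parts are recursively Horton, every
line through two points of `H⁺` leaves all of `H⁻` strictly below it, and every
line through two points of `H⁻` leaves all of `H⁺` strictly above it. -/
inductive IsHorton : List (ℝ × ℝ) → Prop where
  | small : ∀ l : List (ℝ × ℝ), l.length ≤ 2 → SortedX l → IsHorton l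
  | step : ∀ l : List (ℝ × ℝ), SortedX l → 3 ≤ l.length →
      IsHorton (everyOther l) → IsHorton (everyOther l.tail) →
      (∀ a ∈ everyOther l.tail, ∀ b ∈ everyOther l.tail, a ≠ b →
        ∀ p ∈ everyOther l, BelowLine a b p) →
      (∀ a ∈ everyOther l, ∀ b ∈ everyOther l, a ≠ b →
        ∀ p ∈ everyOther l.tail, AboveLine a b p) →
      IsHorton l

lemma aboveLine_iff {a b p : ℝ × ℝ} (h : a.1 < b.1) :
    AboveLine a b p ↔ (b.2 - a.2) * (p.1 - a.1) < (p.2 - a.2) * (b.1 - a.1) := by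
  have hb : 0 < b.1 - a.1 := sub_pos.2 h
  unfold AboveLine
  rw [div_mul_eq_mul_div, ← lt_sub_iff_add_lt', div_lt_iff₀ hb]

lemma belowLine_iff {a b p : ℝ × ℝ} (h : a.1 < b.1) :
    BelowLine a b p ↔ (p.2 - a.2) * (b.1 - a.1) < (b.2 - a.2) * (p.1 - a.1) := by
  have hb : 0 < b.1 - a.1 := sub_pos.2 h
  unfold BelowLine
  rw [← sub_lt_iff_lt_add', div_mul_eq_mul_div, lt_div_iff₀ hb]

lemma ne_of_x_lt {a b : ℝ × ℝ} (h : a.1 < b.1) : a ≠ b := by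
  rintro rfl; exact lt_irrefl _ h

/-- In a Horton set `l` (with even points `H⁺ = everyOther l.tail` and odd points
`H⁻ = everyOther l`), if `hi` and `hj` belong to different parts, then every point of
`H⁺` with x-coordinate strictly between those of `hi` and `hj` lies strictly above the
line through `hi` and `hj`, and every such point of `H⁻` lies strictly below it. -/
theorem horton_between_above_below (l : List (ℝ × ℝ)) (hH : IsHorton l)
    (hi hj : ℝ × ℝ)
    (hmem : (hi ∈ everyOther l.tail ∧ hj ∈ everyOther l) ∨
            (hi ∈ everyOther l ∧ hj ∈ everyOther l.tail))
    (hx : hi.1 < hj.1) :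
    (∀ p ∈ everyOther l.tail, hi.1 < p.1 → p.1 < hj.1 → AboveLine hi hj p) ∧
    (∀ p ∈ everyOther l, hi.1 < p.1 → p.1 < hj.1 → BelowLine hi hj p) := by
  cases hH with
  | small l hlen hsort =>
      match l, hlen with
      | [], _ => simp [everyOther] at hmem
      | [a], _ =>
          simp only [List.tail, everyOther] at hmem
          rcases hmem with ⟨h1, _⟩ | ⟨_, h2⟩
          · simp at h1
          · simp at h2
      | [a, b], _ =>
          simp only [SortedX, List.pairwise_cons, List.mem_singleton] at hsort
          have hab : a.1 < b.1 := hsort.1 b (by simp)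
          simp only [List.tail, everyOther, List.mem_singleton] at hmem ⊢
          rcases hmem with ⟨rfl, rfl⟩ | ⟨rfl, rfl⟩
          · exact absurd hx (not_lt.2 hab.le)
          · constructor
            · rintro p rfl h1 h2; exact absurd h2 (lt_irrefl _)
            · rintro p rfl h1 h2; exact absurd h1 (lt_irrefl _)
  | step l hsort hlen hH1 hH2 hBelow hAbove =>
      rcases hmem with ⟨hiE, hjO⟩ | ⟨hiO, hjE⟩
      · constructor
        · intro p hp h1 h2
          have h := hBelow hi hiE p hp (ne_of_x_lt h1) hj hjO
          rw [belowLine_iff h1] at h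
          rw [aboveLine_iff hx]
          nlinarith [h]
        · intro p hp h1 h2
          have h := hAbove p hp hj hjO (ne_of_x_lt h2) hi hiE
          rw [aboveLine_iff h2] at h
          rw [belowLine_iff hx]
          nlinarith [h]
      · constructor
        · intro p hp h1 h2
          have h := hBelow p hp hj hjE (ne_of_x_lt h2) hi hiO
          rw [belowLine_iff h2] at h
          rw [aboveLine_iff hx]
          nlinarith [h]
        · intro p hp h1 h2
          have h := hAbove hi hiO p hp (ne_of_x_lt h1) hj hjE
          rw [aboveLine_iff h1] at h
          rw [belowLine_iff hx]
          nlinarith [h]
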